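/- arXiv:1910.05144 — 2 statements merged into one kernel-verified Lean document; each statement's English description precedes it below -/
import Mathlib

section
/- Let 0 < δ < q ≤ 1 and define P(k) = (q-δ)·(1-q)^(k-2)·δ·∑_{l=1}^{k-1}((1-δ)/(1-q))^(l-1) + δ·(1-q)^(k-1) for k ≥ 1 (with the convention that for k=1 the first sum is empty). Then ∑_{k=1}^∞ P(k) = 1 and ∑_{k=1}^∞ k·P(k) = 1/δ. -/
/-- pmf of the inter-attempt time of the EH node in the regime `δ < q`:
`P(k) = (q-δ)(1-q)^(k-2) δ ∑_{l=1}^{k-1} ((1-δ)/(1-q))^(l-1) + δ (1-q)^(k-1)`.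
It sums to `1` and has mean `1/δ`. -/
theorem eh_interattempt_mean (δ q : ℝ) (hδ : 0 < δ) (hδq : δ < q) (hq : q < 1)
    (P : ℕ → ℝ)
    (hP : ∀ k : ℕ, P (k + 1) =
      (q - δ) * (1 - q) ^ (k - 1) * δ *
          (∑ l ∈ Finset.range k, ((1 - δ) / (1 - q)) ^ l) +
        δ * (1 - q) ^ k) :
    (∑' k : ℕ, P (k + 1)) = 1 ∧ (∑' k : ℕ, ((k + 1 : ℕ) : ℝ) * P (k + 1)) = 1 / δ := by
  have hq0 : (1 : ℝ) - q ≠ 0 := by nlinarith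
  have hqd : q - δ ≠ 0 := by nlinarith
  have hr : ((1 - δ) / (1 - q)) ≠ 1 := by
    intro h
    rw [div_eq_one_iff_eq hq0] at h
    apply hqd; linarith
  have key : ∀ k : ℕ, P (k + 1) = δ * (1 - δ) ^ k := by
    intro k
    cases k with
    | zero => simp [hP 0]
    | succ m =>
      rw [hP (m + 1), geom_sum_eq hr]
      have hd : (1 - δ) / (1 - q) - 1 = (q - δ) / (1 - q) := by
        rw [div_sub_one hq0]; ring_nf
      rw [hd, div_pow, Nat.add_sub_cancel]
      field_simp
      ring
  have hδ1 : (1 : ℝ) - δ < 1 := by linarith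
  have hδ0 : (0 : ℝ) ≤ 1 - δ := by linarith
  have hnorm : ‖(1 : ℝ) - δ‖ < 1 := by rw [Real.norm_eq_abs, abs_of_nonneg hδ0]; exact hδ1
  constructor
  · simp only [key]
    rw [tsum_mul_left, tsum_geometric_of_lt_one hδ0 hδ1]
    field_simp
    rw [sub_sub_cancel, div_self hδ.ne']
  · simp only [key]
    have h1 : (∑' k : ℕ, ((k + 1 : ℕ) : ℝ) * (δ * (1 - δ) ^ k))
        = ∑' k : ℕ, ((k : ℝ) * (δ * (1 - δ) ^ k) + δ * (1 - δ) ^ k) := by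
      congr 1; funext k; push_cast; ring
    rw [h1]
    have hs1 : Summable (fun k : ℕ => (k : ℝ) * (δ * (1 - δ) ^ k)) := by
      have h2 : Summable (fun k : ℕ => (k : ℝ) * (1 - δ) ^ k) := by
        simpa using summable_pow_mul_geometric_of_norm_lt_one 1 hnorm
      simpa [mul_comm, mul_left_comm] using h2.mul_left δ
    have hs2 : Summable (fun k : ℕ => δ * (1 - δ) ^ k) :=
      (summable_geometric_of_lt_one hδ0 hδ1).mul_left δ
    rw [Summable.tsum_add hs1 hs2]
    have ht1 : (∑' k : ℕ, (k : ℝ) * (δ * (1 - δ) ^ k)) = δ * ((1 - δ) / (1 - (1 - δ)) ^ 2) := by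
      have := tsum_coe_mul_geometric_of_norm_lt_one hnorm
      calc (∑' k : ℕ, (k : ℝ) * (δ * (1 - δ) ^ k))
          = δ * ∑' k : ℕ, (k : ℝ) * (1 - δ) ^ k := by
            rw [← tsum_mul_left]; congr 1; funext k; ring
        _ = δ * ((1 - δ) / (1 - (1 - δ)) ^ 2) := by rw [this]
    rw [ht1, tsum_mul_left, tsum_geometric_of_lt_one hδ0 hδ1]
    rw [sub_sub_cancel]
    field_simp
    ring
end

section
/- Let 0 < δ < q < 1 and define P(k) as in the inter-attempt-time pmf: P(k) = (q-δ)·(1-q)^(k-2)·δ·∑_{l=1}^{k-1}((1-δ)/(1-q))^(l-1) + δ·(1-q)^(k-1) for k ≥ 1. Then ∑_{k=1}^∞ k^2·P(k) = (2-δ)/δ^2. -/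
/-- pmf of the inter-attempt time of the EH node in the regime `δ < q`:
`P(k) = (q-δ)(1-q)^(k-2) δ ∑_{l=1}^{k-1} ((1-δ)/(1-q))^(l-1) + δ (1-q)^(k-1)`.
It sums to `1` and has mean `1/δ`. -/
theorem eh_interattempt_second_moment (δ q : ℝ) (hδ : 0 < δ) (hδq : δ < q) (hq : q < 1)
    (P : ℕ → ℝ)
    (hP : ∀ k : ℕ, P (k + 1) =
      (q - δ) * (1 - q) ^ (k - 1) * δ *
          (∑ l ∈ Finset.range k, ((1 - δ) / (1 - q)) ^ l) +
        δ * (1 - q) ^ k) :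
    (∑' k : ℕ, (((k + 1 : ℕ) : ℝ)) ^ 2 * P (k + 1)) = (2 - δ) / δ ^ 2 := by
  have hq0 : (1 : ℝ) - q ≠ 0 := by linarith
  have hqδ : q - δ ≠ 0 := by linarith
  have key : ∀ k : ℕ, P (k + 1) = δ * (1 - δ) ^ k := by
    intro k
    cases k with
    | zero => simp [hP 0]
    | succ n =>
      rw [hP (n + 1)]
      have hr1 : (1 - δ) / (1 - q) ≠ 1 := by
        intro h
        rw [div_eq_one_iff_eq hq0] at h
        apply hqδ; linarith
      rw [geom_sum_eq hr1]
      have : Nat.succ n - 1 = n := rfl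
      rw [this, div_pow, div_sub_one hq0]
      have h3 : (1 : ℝ) - δ - (1 - q) ≠ 0 := by intro h; apply hqδ; linarith
      field_simp [h3]
      ring
  have hr : ‖(1 : ℝ) - δ‖ < 1 := by
    rw [Real.norm_eq_abs, abs_lt]; constructor <;> linarith
  have h2 := hasSum_choose_mul_geometric_of_norm_lt_one 2 hr
  have h1 := hasSum_choose_mul_geometric_of_norm_lt_one 1 hr
  have hsum := ((h2.mul_left 2).sub h1).mul_left δ
  have heq : (fun n : ℕ => δ * (2 * ((((n + 2).choose 2 : ℕ) : ℝ) * (1 - δ) ^ n)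
      - (((n + 1).choose 1 : ℕ) : ℝ) * (1 - δ) ^ n))
      = fun n : ℕ => (((n + 1 : ℕ) : ℝ)) ^ 2 * P (n + 1) := by
    funext n
    rw [key n, Nat.cast_choose_two, Nat.choose_one_right]
    push_cast
    ring
  rw [heq] at hsum
  rw [hsum.tsum_eq]
  have hδ' : (1 : ℝ) - (1 - δ) = δ := by ring
  rw [hδ']
  field_simp
  ring
end
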